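/- Let H₁,…,H_K be complex channel matrices, N₁,…,N_K positive integers with N = ∑_k N_k, and 𝒾 > 0. Suppose the recursively defined precoders T̃_k (T̃_k = U_{N_k,k} Γ_k^{1/2} S_k, built from the eigenvalue decomposition of 𝒜_k = H_kᴴ Σ_k⁻¹ H_kᴴ-whitened Gram matrices with inverse water-filling loadings for per-user information 𝒾_k = (N_k/N)𝒾, Σ_{k+1} = Σ_k + H_k T̃_k T̃_kᴴ H_kᴴ, Σ₁ = I) satisfy N_k ≤ r_k for all k, and that each S_k is chosen as the S-factor of the equal-diagonal QRS decomposition of J_k^{1/2}, where J_k = I + T̃_kᴴ H_kᴴ Σ_k⁻¹ H_k T̃_k. Then the Cholesky R-factor R_k of each J_k has all diagonal entries equal to 2^{𝒾/(2N)}, and the average MSE of MMSE decision-feedback detection satisfies (1/N) ∑_{k=1}^{K} ∑_{j=1}^{N_k} ([R_k]_{jj})⁻² = 2^{-𝒾/N}; hence the T̃_k attain the minimum of the average MSE over all precoder sequences {T_k} with log₂ det(I + ∑_k H_k T_k T_kᴴ H_kᴴ) = 𝒾. -/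

import Mathlib

open Matrix BigOperators
open scoped ComplexOrder

private lemma aux_cholesky_det {n : ℕ} {Jm Rm : Matrix (Fin n) (Fin n) ℂ}
    (hfact : Jm = Rmᴴ * Rm) (hTri : Rm.BlockTriangular id)
    (hdiag : ∀ j, (Rm j j).im = 0) :
    Jm.det = ((∏ j, (Rm j j).re ^ 2 : ℝ) : ℂ) := by
  rw [hfact, Matrix.det_mul, Matrix.det_conjTranspose,
    Matrix.det_of_upperTriangular hTri, star_prod, ← Finset.prod_mul_distrib,
    Complex.ofReal_prod]
  refine Finset.prod_congr rfl fun j _ => ?_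
  have h : Rm j j = ((Rm j j).re : ℂ) := Complex.ext rfl (by simp [hdiag j])
  rw [h]
  simp [← Complex.ofReal_mul, ← Complex.ofReal_pow, Complex.conj_ofReal, sq]

private lemma aux_det_step {P n : ℕ} {Sm : Matrix (Fin P) (Fin P) ℂ} (hS : Sm.PosDef)
    (B : Matrix (Fin P) (Fin n) ℂ) :
    (1 + Bᴴ * Sm⁻¹ * B).det * Sm.det = (Sm + B * Bᴴ).det := by
  have hd : IsUnit Sm.det := hS.det_pos.ne'.isUnit
  rw [Matrix.det_one_add_mul_comm, ← Matrix.det_mul, add_mul, one_mul,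
      Matrix.mul_assoc B, Matrix.mul_assoc Bᴴ, Matrix.nonsing_inv_mul _ hd, Matrix.mul_one]

private lemma aux_posdef {P K : ℕ} {Mdim N : Fin K → ℕ}
    (H : ∀ k : Fin K, Matrix (Fin P) (Fin (Mdim k)) ℂ)
    (T' : ∀ k : Fin K, Matrix (Fin (Mdim k)) (Fin (N k)) ℂ)
    (Sig' : Fin (K + 1) → Matrix (Fin P) (Fin P) ℂ)
    (h0 : Sig' 0 = 1)
    (hrec : ∀ k : Fin K, Sig' k.succ = Sig' k.castSucc + H k * T' k * (T' k)ᴴ * (H k)ᴴ) :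
    ∀ j, (Sig' j).PosDef := by
  intro j
  induction j using Fin.induction with
  | zero => rw [h0]; exact Matrix.PosDef.one
  | succ i ih =>
    rw [hrec i]
    have h : H i * T' i * (T' i)ᴴ * (H i)ᴴ = (H i * T' i) * (H i * T' i)ᴴ := by
      rw [Matrix.conjTranspose_mul]; simp [Matrix.mul_assoc]
    rw [h]
    exact ih.add_posSemidef (Matrix.posSemidef_self_mul_conjTranspose _)

private lemma aux_last_eq {P K : ℕ} {Mdim N : Fin K → ℕ}
    (H : ∀ k : Fin K, Matrix (Fin P) (Fin (Mdim k)) ℂ)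
    (T' : ∀ k : Fin K, Matrix (Fin (Mdim k)) (Fin (N k)) ℂ)
    (Sig' : Fin (K + 1) → Matrix (Fin P) (Fin P) ℂ)
    (h0 : Sig' 0 = 1)
    (hrec : ∀ k : Fin K, Sig' k.succ = Sig' k.castSucc + H k * T' k * (T' k)ᴴ * (H k)ᴴ) :
    Sig' (Fin.last K) = 1 + ∑ k : Fin K, H k * T' k * (T' k)ᴴ * (H k)ᴴ := by
  set g : ℕ → Matrix (Fin P) (Fin P) ℂ := fun i =>
    if h : i < K then H ⟨i, h⟩ * T' ⟨i, h⟩ * (T' ⟨i, h⟩)ᴴ * (H ⟨i, h⟩)ᴴ else 0 with hg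
  have key : ∀ n (hn : n ≤ K),
      Sig' ⟨n, Nat.lt_succ_of_le hn⟩ = 1 + ∑ i ∈ Finset.range n, g i := by
    intro n
    induction n with
    | zero => intro _; simpa using h0
    | succ n ih =>
      intro hn
      have hnK : n < K := hn
      have h1 : (⟨n + 1, Nat.lt_succ_of_le hn⟩ : Fin (K + 1)) = (⟨n, hnK⟩ : Fin K).succ := rfl
      have h2 : (⟨n, hnK⟩ : Fin K).castSucc = ⟨n, Nat.lt_succ_of_le hnK.le⟩ := rfl
      rw [h1, hrec ⟨n, hnK⟩, h2, ih hnK.le, Finset.sum_range_succ, ← add_assoc]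
      congr 1
      simp only [hg, hnK, dif_pos]
  have hK : (Fin.last K) = ⟨K, Nat.lt_succ_of_le le_rfl⟩ := rfl
  rw [hK, key K le_rfl]
  congr 1
  rw [← Fin.sum_univ_eq_sum_range]
  refine Finset.sum_congr rfl fun i _ => ?_
  simp only [hg, Fin.eta, i.isLt, dif_pos]

private lemma aux_det_prod {P K : ℕ} {Mdim N : Fin K → ℕ}
    (H : ∀ k : Fin K, Matrix (Fin P) (Fin (Mdim k)) ℂ)
    (T' : ∀ k : Fin K, Matrix (Fin (Mdim k)) (Fin (N k)) ℂ)
    (Sig' : Fin (K + 1) → Matrix (Fin P) (Fin P) ℂ)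
    (h0 : Sig' 0 = 1)
    (hrec : ∀ k : Fin K, Sig' k.succ = Sig' k.castSucc + H k * T' k * (T' k)ᴴ * (H k)ᴴ) :
    (Sig' (Fin.last K)).det = ∏ k : Fin K,
      (1 + (H k * T' k)ᴴ * (Sig' k.castSucc)⁻¹ * (H k * T' k)).det := by
  have hPD := aux_posdef H T' Sig' h0 hrec
  set g : ℕ → ℂ := fun i =>
    if h : i < K then
      (1 + (H ⟨i, h⟩ * T' ⟨i, h⟩)ᴴ * (Sig' (⟨i, h⟩ : Fin K).castSucc)⁻¹
        * (H ⟨i, h⟩ * T' ⟨i, h⟩)).det else 1 with hg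
  have key : ∀ n (hn : n ≤ K),
      (Sig' ⟨n, Nat.lt_succ_of_le hn⟩).det = ∏ i ∈ Finset.range n, g i := by
    intro n
    induction n with
    | zero => intro _; simp [show (⟨0, Nat.lt_succ_of_le (Nat.zero_le K)⟩ : Fin (K+1)) = 0 from rfl, h0]
    | succ n ih =>
      intro hn
      have hnK : n < K := hn
      have h1 : (⟨n + 1, Nat.lt_succ_of_le hn⟩ : Fin (K + 1)) = (⟨n, hnK⟩ : Fin K).succ := rfl
      have hB : H ⟨n, hnK⟩ * T' ⟨n, hnK⟩ * (T' ⟨n, hnK⟩)ᴴ * (H ⟨n, hnK⟩)ᴴ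
          = (H ⟨n, hnK⟩ * T' ⟨n, hnK⟩) * (H ⟨n, hnK⟩ * T' ⟨n, hnK⟩)ᴴ := by
        rw [Matrix.conjTranspose_mul]; simp [Matrix.mul_assoc]
      rw [h1, hrec ⟨n, hnK⟩, hB, ← aux_det_step (hPD (⟨n, hnK⟩ : Fin K).castSucc),
        Finset.prod_range_succ, ← ih hnK.le, mul_comm]
      congr 1
      · simp only [hg, hnK, dif_pos]
  have hK : (Fin.last K) = ⟨K, Nat.lt_succ_of_le le_rfl⟩ := rfl
  rw [hK, key K le_rfl, ← Fin.prod_univ_eq_prod_range]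
  refine Finset.prod_congr rfl fun i _ => ?_
  simp only [hg, Fin.eta, i.isLt, dif_pos]

private lemma aux_detJ {m n : ℕ} (hnm : n ≤ m)
    (Am Um : Matrix (Fin m) (Fin m) ℂ)
    (hU : Um ∈ Matrix.unitaryGroup (Fin m) ℂ)
    (lam : ℕ → ℝ)
    (hdecomp : Am = Um * Matrix.diagonal (fun i : Fin m => ((lam i : ℝ) : ℂ)) * Umᴴ)
    (gam : ℕ → ℝ) (hgnn : ∀ j < n, 0 ≤ gam j)
    (Sm : Matrix (Fin n) (Fin n) ℂ) (hS : Sm ∈ Matrix.unitaryGroup (Fin n) ℂ)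
    (Tm : Matrix (Fin m) (Fin n) ℂ)
    (hT : Tm = Um.submatrix id (Fin.castLE hnm) *
      Matrix.diagonal (fun j : Fin n => ((Real.sqrt (gam j) : ℝ) : ℂ)) * Sm) :
    (1 + Tmᴴ * Am * Tm).det
      = ((∏ j ∈ Finset.range n, (1 + gam j * lam j) : ℝ) : ℂ) := by
  have hUU : Umᴴ * Um = 1 := by
    rw [← Matrix.star_eq_conjTranspose]; exact Unitary.star_mul_self_of_mem hU
  have hSS : Smᴴ * Sm = 1 := by
    rw [← Matrix.star_eq_conjTranspose]; exact Unitary.star_mul_self_of_mem hS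
  set e : Fin n → Fin m := Fin.castLE hnm with he
  set Lam := Matrix.diagonal (fun i : Fin m => ((lam i : ℝ) : ℂ)) with hLam
  set D := Matrix.diagonal (fun j : Fin n => ((Real.sqrt (gam j) : ℝ) : ℂ)) with hD
  set U' := Um.submatrix id e with hU'
  -- the compression of Am by U' is diagonal
  have hcomp : U'ᴴ * Am * U' = Matrix.diagonal (fun j : Fin n => ((lam j : ℝ) : ℂ)) := by
    have h1 : U'ᴴ = Umᴴ.submatrix e id := by
      rw [hU', Matrix.conjTranspose_submatrix]
    have h2 : Umᴴ.submatrix e id * Am = (Umᴴ * Am).submatrix e id := by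
      have := Matrix.submatrix_mul Umᴴ Am e id id Function.bijective_id
      simpa using this.symm
    have h3 : (Umᴴ * Am).submatrix e id * U' = ((Umᴴ * Am) * Um).submatrix e e := by
      have := Matrix.submatrix_mul (Umᴴ * Am) Um e id e Function.bijective_id
      simpa using this.symm
    have h4 : Umᴴ * Am * Um = Lam := by
      rw [hdecomp]
      calc Umᴴ * (Um * Lam * Umᴴ) * Um = (Umᴴ * Um) * Lam * (Umᴴ * Um) := by
            simp only [Matrix.mul_assoc]
        _ = Lam := by rw [hUU, Matrix.one_mul, Matrix.mul_one]
    have h5 : Lam.submatrix e e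
        = Matrix.diagonal (fun j : Fin n => ((lam j : ℝ) : ℂ)) := by
      rw [hLam, Matrix.submatrix_diagonal _ e (Fin.castLE_injective hnm)]
      rfl
    rw [h1, h2, h3, h4, h5]
  have hDH : Dᴴ = D := by
    have hv : (star fun j : Fin n => ((Real.sqrt (gam j) : ℝ) : ℂ))
        = fun j : Fin n => ((Real.sqrt (gam j) : ℝ) : ℂ) := by
      funext j
      simp [Pi.star_apply, Complex.star_def, Complex.conj_ofReal]
    rw [hD, Matrix.diagonal_conjTranspose, hv]
  -- reduce to the diagonal determinant
  have hTAT : Tmᴴ * Am * Tm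
      = Smᴴ * Matrix.diagonal (fun j : Fin n => ((gam j * lam j : ℝ) : ℂ)) * Sm := by
    rw [hT]
    have hfun : (fun j : Fin n => ((Real.sqrt (gam j) : ℝ) : ℂ) * ((lam j : ℝ) : ℂ)
          * ((Real.sqrt (gam j) : ℝ) : ℂ))
        = fun j : Fin n => ((gam j * lam j : ℝ) : ℂ) := by
      funext j
      rw [← Complex.ofReal_mul, ← Complex.ofReal_mul, Complex.ofReal_inj,
        mul_right_comm, Real.mul_self_sqrt (hgnn j j.isLt)]
    have hdd : D * Matrix.diagonal (fun j : Fin n => ((lam j : ℝ) : ℂ)) * D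
        = Matrix.diagonal (fun j : Fin n => ((gam j * lam j : ℝ) : ℂ)) := by
      rw [hD, Matrix.diagonal_mul_diagonal, Matrix.diagonal_mul_diagonal, hfun]
    rw [Matrix.conjTranspose_mul, Matrix.conjTranspose_mul]
    calc Smᴴ * (Dᴴ * U'ᴴ) * Am * (U' * D * Sm)
        = Smᴴ * (Dᴴ * (U'ᴴ * Am * U') * D) * Sm := by simp only [Matrix.mul_assoc]
      _ = Smᴴ * Matrix.diagonal (fun j : Fin n => ((gam j * lam j : ℝ) : ℂ)) * Sm := by
          rw [hcomp, hDH, hdd]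
  rw [hTAT]
  have hone : (1 : Matrix (Fin n) (Fin n) ℂ) = Smᴴ * 1 * Sm := by
    rw [Matrix.mul_one, hSS]
  conv_lhs => rw [hone]
  have hcollect : Smᴴ * 1 * Sm + Smᴴ * Matrix.diagonal (fun j : Fin n => ((gam j * lam j : ℝ) : ℂ)) * Sm
      = Smᴴ * (1 + Matrix.diagonal (fun j : Fin n => ((gam j * lam j : ℝ) : ℂ))) * Sm := by
    rw [Matrix.mul_add, Matrix.add_mul]
  rw [hcollect, Matrix.det_mul, Matrix.det_mul]
  have hdet1 : Smᴴ.det * Sm.det = 1 := by rw [← Matrix.det_mul, hSS, Matrix.det_one]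
  have : Smᴴ.det * (1 + Matrix.diagonal (fun j : Fin n => ((gam j * lam j : ℝ) : ℂ))).det * Sm.det
      = (1 + Matrix.diagonal (fun j : Fin n => ((gam j * lam j : ℝ) : ℂ))).det := by
    rw [mul_right_comm, hdet1, one_mul]
  rw [this]
  have hdiagsum : (1 : Matrix (Fin n) (Fin n) ℂ)
      + Matrix.diagonal (fun j : Fin n => ((gam j * lam j : ℝ) : ℂ))
      = Matrix.diagonal (fun j : Fin n => ((1 + gam j * lam j : ℝ) : ℂ)) := by
    rw [← Matrix.diagonal_one, Matrix.diagonal_add]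
    congr 1
    funext j
    push_cast
    ring
  rw [hdiagsum, Matrix.det_diagonal, Complex.ofReal_prod, ← Fin.prod_univ_eq_prod_range]

private lemma aux_waterfill {lam gam : ℕ → ℝ} {n R : ℕ} (hnR : n ≤ R) (hn : 0 < n)
    (c : ℝ)
    (hnonneg : ∀ i < R, 0 ≤ lam i)
    (hactive : ∀ i < R,
      ((∏ j ∈ Finset.range R, lam j) / 2 ^ c) ^ ((1 : ℝ) / R) < lam i)
    (hgam : ∀ i < n, gam i
      = (2 ^ c / ∏ j ∈ Finset.range n, lam j) ^ ((1 : ℝ) / n) - (lam i)⁻¹) :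
    (∀ i < n, 0 ≤ gam i) ∧
      ∏ i ∈ Finset.range n, (1 + gam i * lam i) = 2 ^ c := by
  have hR : 0 < R := lt_of_lt_of_le hn hnR
  have h2c : (0 : ℝ) < 2 ^ c := Real.rpow_pos_of_pos two_pos c
  set G : ℝ := ((∏ j ∈ Finset.range R, lam j) / 2 ^ c) ^ ((1 : ℝ) / R) with hG
  have hprodRnn : 0 ≤ ∏ j ∈ Finset.range R, lam j :=
    Finset.prod_nonneg fun i hi => hnonneg i (Finset.mem_range.1 hi)
  have hGnn : 0 ≤ G := Real.rpow_nonneg (div_nonneg hprodRnn h2c.le) _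
  have hlampos : ∀ i < R, 0 < lam i := fun i hi => lt_of_le_of_lt hGnn (hactive i hi)
  have hprodn_pos : 0 < ∏ j ∈ Finset.range n, lam j :=
    Finset.prod_pos fun i hi => hlampos i (lt_of_lt_of_le (Finset.mem_range.1 hi) hnR)
  have hprodR_pos : 0 < ∏ j ∈ Finset.range R, lam j :=
    Finset.prod_pos fun i hi => hlampos i (Finset.mem_range.1 hi)
  have hGpos : 0 < G := Real.rpow_pos_of_pos (div_pos hprodR_pos h2c) _
  set GN : ℝ := ((∏ j ∈ Finset.range n, lam j) / 2 ^ c) ^ ((1 : ℝ) / n) with hGN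
  have hGNpos : 0 < GN := Real.rpow_pos_of_pos (div_pos hprodn_pos h2c) _
  have hpowR : G ^ R = (∏ j ∈ Finset.range R, lam j) / 2 ^ c := by
    rw [hG, one_div]
    exact Real.rpow_inv_natCast_pow (div_nonneg hprodRnn h2c.le) hR.ne'
  have hpowN : GN ^ n = (∏ j ∈ Finset.range n, lam j) / 2 ^ c := by
    rw [hGN, one_div]
    exact Real.rpow_inv_natCast_pow (div_nonneg hprodn_pos.le h2c.le) hn.ne'
  -- GN ≤ G
  have hsplit : (∏ j ∈ Finset.range n, lam j) * ∏ j ∈ Finset.Ico n R, lam j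
      = ∏ j ∈ Finset.range R, lam j := Finset.prod_range_mul_prod_Ico lam hnR
  have hIco_ge : G ^ (R - n) ≤ ∏ j ∈ Finset.Ico n R, lam j := by
    have := Finset.prod_le_prod (s := Finset.Ico n R) (f := fun _ => G) (g := lam)
      (fun i _ => hGnn) (fun i hi => (hactive i (Finset.mem_Ico.1 hi).2).le)
    simpa [Finset.prod_const, Nat.card_Ico] using this
  have hGIcopos : 0 < ∏ j ∈ Finset.Ico n R, lam j :=
    Finset.prod_pos fun i hi => hlampos i (Finset.mem_Ico.1 hi).2
  have hGN_le : GN ≤ G := by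
    have h1 : (∏ j ∈ Finset.range n, lam j)
        = (∏ j ∈ Finset.range R, lam j) / ∏ j ∈ Finset.Ico n R, lam j := by
      field_simp [hGIcopos.ne'] at hsplit ⊢
      linarith [hsplit]
    have hpow_mul : G ^ n * G ^ (R - n) = G ^ R := by
      rw [← pow_add]; congr 1; omega
    have h3 : (∏ j ∈ Finset.range R, lam j) / G ^ (R - n) / 2 ^ c = G ^ n := by
      have h4 : (∏ j ∈ Finset.range R, lam j) / 2 ^ c = G ^ n * G ^ (R - n) := by
        rw [hpow_mul, hpowR]
      rw [div_right_comm, h4, mul_div_cancel_right₀ _ (pow_pos hGpos _).ne']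
    have hkey : GN ^ n ≤ G ^ n := by
      rw [hpowN, h1, ← h3]
      gcongr
    exact (pow_le_pow_iff_left₀ hGNpos.le hGpos.le hn.ne').1 hkey
  have hmu : (2 ^ c / ∏ j ∈ Finset.range n, lam j) ^ ((1 : ℝ) / n) = GN⁻¹ := by
    rw [hGN, ← Real.inv_rpow (div_nonneg hprodn_pos.le h2c.le), inv_div]
  have hgnn : ∀ i < n, 0 ≤ gam i := by
    intro i hi
    rw [hgam i hi, hmu, sub_nonneg]
    exact inv_anti₀ hGNpos
      (hGN_le.trans (hactive i (lt_of_lt_of_le hi hnR)).le)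
  refine ⟨hgnn, ?_⟩
  have hterm : ∀ i ∈ Finset.range n, 1 + gam i * lam i = GN⁻¹ * lam i := by
    intro i hi
    have hi' := Finset.mem_range.1 hi
    rw [hgam i hi', hmu, sub_mul, inv_mul_cancel₀ (hlampos i (hi'.trans_le hnR)).ne']
    ring
  rw [Finset.prod_congr rfl hterm, Finset.prod_mul_distrib, Finset.prod_const,
    Finset.card_range, inv_pow, hpowN, inv_div, div_mul_cancel₀ _ hprodn_pos.ne']

/-- Optimality of the main theorem's design: with the recursively
built inverse water-filling precoders `T̃ k` (per-user information
`𝒾_k = (N k / N) 𝒾`, `N k ≤ r k` for all `k`) and with each `S k` chosen as the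
S-factor of the equal-diagonal QRS decomposition of `(J k)^(1/2)` — i.e. such that the
Cholesky R-factor `R k` of `J k = I + (T̃ k)ᴴ (H k)ᴴ (Σ k)⁻¹ (H k) (T̃ k)` has equal
diagonal entries — every diagonal entry of `R k` equals `2 ^ (𝒾 / (2N))`, the average
MSE equals `(1/N) ∑ k ∑ j, ([R k] j j)⁻² = 2 ^ (−𝒾/N)`, and hence the `T̃ k` attain the
minimum average MSE among all precoder sequences achieving sum mutual information `𝒾`. -/
theorem multiuser_transceiver_attains_min_avg_mse {P K : ℕ}
    (Mdim L N : Fin K → ℕ)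
    (H : ∀ k : Fin K, Matrix (Fin P) (Fin (Mdim k)) ℂ)
    (hrank : ∀ k, (H k).rank = L k)
    (hNpos' : ∀ k, 0 < N k) (hNL : ∀ k, N k ≤ L k) (hNM : ∀ k, N k ≤ Mdim k)
    (Ntot : ℕ) (hNtot : Ntot = ∑ k, N k) (hNpos : 0 < Ntot)
    (Info : ℝ) (hI : 0 < Info)
    (Sig : Fin (K + 1) → Matrix (Fin P) (Fin P) ℂ)
    (hSig0 : Sig 0 = 1)
    (A : ∀ k : Fin K, Matrix (Fin (Mdim k)) (Fin (Mdim k)) ℂ)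
    (hA : ∀ k, A k = (H k)ᴴ * (Sig k.castSucc)⁻¹ * H k)
    (U : ∀ k : Fin K, Matrix (Fin (Mdim k)) (Fin (Mdim k)) ℂ)
    (hU : ∀ k, U k ∈ Matrix.unitaryGroup (Fin (Mdim k)) ℂ)
    (lam : Fin K → ℕ → ℝ)
    (hdecomp : ∀ k, A k =
      U k * Matrix.diagonal (fun i : Fin (Mdim k) => ((lam k i : ℝ) : ℂ)) * (U k)ᴴ)
    (hmono : ∀ k, ∀ i j : ℕ, i ≤ j → j < Mdim k → lam k j ≤ lam k i)
    (hnonneg : ∀ k, ∀ n < Mdim k, 0 ≤ lam k n)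
    (r : Fin K → ℕ)
    (hrpos : ∀ k, 0 < r k) (hrM : ∀ k, r k ≤ Mdim k)
    (hactive : ∀ k, ∀ n < r k,
      ((∏ i ∈ Finset.range (r k), lam k i) / 2 ^ ((N k : ℝ) / Ntot * Info))
          ^ ((1 : ℝ) / (r k)) < lam k n)
    (hmax : ∀ k, ∀ r', r k < r' → r' ≤ Mdim k →
      ¬ (∀ n < r',
        ((∏ i ∈ Finset.range r', lam k i) / 2 ^ ((N k : ℝ) / Ntot * Info))
            ^ ((1 : ℝ) / r') < lam k n))
    (hNr : ∀ k, N k ≤ r k)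
    (gam : Fin K → ℕ → ℝ)
    (hgam : ∀ k, ∀ n < N k, gam k n =
      (2 ^ ((N k : ℝ) / Ntot * Info) / ∏ i ∈ Finset.range (N k), lam k i)
          ^ ((1 : ℝ) / (N k)) - (lam k n)⁻¹)
    (S : ∀ k : Fin K, Matrix (Fin (N k)) (Fin (N k)) ℂ)
    (hS : ∀ k, S k ∈ Matrix.unitaryGroup (Fin (N k)) ℂ)
    (T : ∀ k : Fin K, Matrix (Fin (Mdim k)) (Fin (N k)) ℂ)
    (hT : ∀ k, T k = (U k).submatrix id (Fin.castLE (hNM k)) *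
      Matrix.diagonal (fun n : Fin (N k) => ((Real.sqrt (gam k n) : ℝ) : ℂ)) * S k)
    (hSigS : ∀ k : Fin K,
      Sig k.succ = Sig k.castSucc + H k * T k * (T k)ᴴ * (H k)ᴴ)
    (J : ∀ k : Fin K, Matrix (Fin (N k)) (Fin (N k)) ℂ)
    (hJ : ∀ k, J k = 1 + (T k)ᴴ * (H k)ᴴ * (Sig k.castSucc)⁻¹ * (H k) * T k)
    (R : ∀ k : Fin K, Matrix (Fin (N k)) (Fin (N k)) ℂ)
    (hfact : ∀ k, J k = (R k)ᴴ * R k)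
    (hTri : ∀ k, (R k).BlockTriangular id)
    (hdiag : ∀ k, ∀ j, ((R k) j j).im = 0 ∧ 0 < ((R k) j j).re)
    -- `S k` is the S-factor of the equal-diagonal QRS decomposition of `(J k)^(1/2)`:
    -- it makes the Cholesky R-factor of `J k` have equal diagonal entries.
    (hSchoice : ∀ k, ∀ i j, (R k) i i = (R k) j j) :
    (∀ k, ∀ j, (R k) j j = (((2 : ℝ) ^ (Info / (2 * Ntot)) : ℝ) : ℂ)) ∧
    (1 / Ntot) * (∑ k, ∑ j, (((R k) j j).re) ^ (-2 : ℤ)) = (2 : ℝ) ^ (-(Info / Ntot)) ∧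
    (∀ (T' : ∀ k : Fin K, Matrix (Fin (Mdim k)) (Fin (N k)) ℂ)
        (Sig' : Fin (K + 1) → Matrix (Fin P) (Fin P) ℂ)
        (R' : ∀ k : Fin K, Matrix (Fin (N k)) (Fin (N k)) ℂ),
      Sig' 0 = 1 →
      (∀ k : Fin K, Sig' k.succ = Sig' k.castSucc + H k * T' k * (T' k)ᴴ * (H k)ᴴ) →
      (∀ k, (1 : Matrix (Fin (N k)) (Fin (N k)) ℂ)
          + (T' k)ᴴ * (H k)ᴴ * (Sig' k.castSucc)⁻¹ * (H k) * T' k = (R' k)ᴴ * R' k) →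
      (∀ k, (R' k).BlockTriangular id) →
      (∀ k, ∀ j, ((R' k) j j).im = 0 ∧ 0 < ((R' k) j j).re) →
      Real.logb 2 ((1 + ∑ k, H k * T' k * (T' k)ᴴ * (H k)ᴴ).det).re = Info →
      (1 / Ntot) * (∑ k, ∑ j, (((R k) j j).re) ^ (-2 : ℤ)) ≤
        (1 / Ntot) * (∑ k, ∑ j, (((R' k) j j).re) ^ (-2 : ℤ))) := by
  
  classical
  have hNtotR : (0 : ℝ) < Ntot := by exact_mod_cast hNpos
  -- determinant of each J k
  have hdetJ : ∀ k : Fin K,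
      (J k).det = (((2 : ℝ) ^ ((N k : ℝ) / Ntot * Info) : ℝ) : ℂ) := by
    intro k
    have hwf := aux_waterfill (hNr k) (hNpos' k) ((N k : ℝ) / Ntot * Info)
      (fun i hi => hnonneg k i (lt_of_lt_of_le hi (hrM k)))
      (fun i hi => hactive k i hi) (fun i hi => hgam k i hi)
    have hJk : J k = 1 + (T k)ᴴ * A k * T k := by
      rw [hJ k, hA k]
      congr 1
      simp only [Matrix.mul_assoc]
    rw [hJk, aux_detJ (hNM k) (A k) (U k) (hU k) (lam k) (hdecomp k) (gam k)
      hwf.1 (S k) (hS k) (T k) (hT k), hwf.2]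
  -- Part 1
  have key1 : ∀ k : Fin K, ∀ j, (R k) j j = (((2 : ℝ) ^ (Info / (2 * Ntot)) : ℝ) : ℂ) := by
    intro k j
    have hchol := aux_cholesky_det (hfact k) (hTri k) (fun j' => (hdiag k j').1)
    have hρpos : 0 < ((R k) j j).re := (hdiag k j).2
    have hbpos : (0 : ℝ) < (2 : ℝ) ^ (Info / (2 * Ntot)) :=
      Real.rpow_pos_of_pos two_pos _
    have hprodeq : ∏ j' : Fin (N k), ((R k) j' j').re ^ 2
        = (((R k) j j).re ^ 2) ^ (N k) := by
      rw [Finset.prod_congr rfl (fun j' _ => by rw [hSchoice k j' j]),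
        Finset.prod_const, Finset.card_univ, Fintype.card_fin]
    have hb2 : ((2 : ℝ) ^ (Info / (2 * Ntot))) ^ 2 = (2 : ℝ) ^ (Info / Ntot) := by
      rw [← Real.rpow_natCast ((2:ℝ) ^ (Info / (2 * Ntot))) 2,
        ← Real.rpow_mul (by norm_num : (0:ℝ) ≤ 2)]
      congr 1
      field_simp
      ring
    have hbN : (((2 : ℝ) ^ (Info / (2 * Ntot))) ^ 2) ^ (N k)
        = (2 : ℝ) ^ ((N k : ℝ) / Ntot * Info) := by
      rw [hb2, ← Real.rpow_natCast ((2:ℝ) ^ (Info / Ntot)) (N k),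
        ← Real.rpow_mul (by norm_num : (0:ℝ) ≤ 2)]
      congr 1
      field_simp
    have hmain : (((R k) j j).re ^ 2) ^ (N k)
        = (((2 : ℝ) ^ (Info / (2 * Ntot))) ^ 2) ^ (N k) := by
      rw [← hprodeq, hbN]
      exact Complex.ofReal_inj.1 (hchol.symm.trans (hdetJ k))
    have hsq : ((R k) j j).re ^ 2 = ((2 : ℝ) ^ (Info / (2 * Ntot))) ^ 2 := by
      have h1 := (pow_le_pow_iff_left₀ (sq_nonneg _) (sq_nonneg _)
        (hNpos' k).ne').1 hmain.le
      have h2 := (pow_le_pow_iff_left₀ (sq_nonneg _) (sq_nonneg _)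
        (hNpos' k).ne').1 hmain.ge
      linarith
    have hre : ((R k) j j).re = (2 : ℝ) ^ (Info / (2 * Ntot)) := by
      have h1 := (pow_le_pow_iff_left₀ hρpos.le hbpos.le two_ne_zero).1 hsq.le
      have h2 := (pow_le_pow_iff_left₀ hbpos.le hρpos.le two_ne_zero).1 hsq.ge
      linarith
    exact Complex.ext (by simpa using hre) (by simpa using (hdiag k j).1)
  -- Part 2
  have hterm : ∀ k : Fin K, ∀ j, (((R k) j j).re) ^ (-2 : ℤ)
      = (2 : ℝ) ^ (-(Info / Ntot)) := by
    intro k j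
    have hre : ((R k) j j).re = (2 : ℝ) ^ (Info / (2 * Ntot)) := by
      rw [key1 k j]; simp
    rw [hre, _root_.zpow_neg]
    have h2 : ((2 : ℝ) ^ (Info / (2 * Ntot))) ^ (2 : ℤ)
        = (2 : ℝ) ^ (Info / Ntot) := by
      rw [zpow_two, ← sq]
      rw [← Real.rpow_natCast ((2:ℝ) ^ (Info / (2 * Ntot))) 2,
        ← Real.rpow_mul (by norm_num : (0:ℝ) ≤ 2)]
      congr 1
      field_simp
      ring
    rw [h2, ← Real.rpow_neg (by norm_num : (0:ℝ) ≤ 2)]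
  have hsum : (1 / (Ntot : ℝ)) * (∑ k, ∑ j, (((R k) j j).re) ^ (-2 : ℤ))
      = (2 : ℝ) ^ (-(Info / Ntot)) := by
    have h1 : (∑ k, ∑ j, (((R k) j j).re) ^ (-2 : ℤ))
        = (Ntot : ℝ) * (2 : ℝ) ^ (-(Info / Ntot)) := by
      rw [Finset.sum_congr rfl (fun k _ => Finset.sum_congr rfl (fun j _ => hterm k j))]
      simp only [Finset.sum_const, Finset.card_univ, Fintype.card_fin, nsmul_eq_mul]
      rw [← Finset.sum_mul, hNtot]
      norm_cast
    rw [h1, ← mul_assoc, one_div, inv_mul_cancel₀ hNtotR.ne', one_mul]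
  refine ⟨key1, hsum, ?_⟩
  -- Part 3: optimality
  intro T' Sig' R' hSig0' hSigS' hJ' hTri' hdiag' hInfo'
  rw [hsum]
  have hdetprod := aux_det_prod H T' Sig' hSig0' hSigS'
  have hlast := aux_last_eq H T' Sig' hSig0' hSigS'
  have hdetk : ∀ k : Fin K,
      (1 + (H k * T' k)ᴴ * (Sig' k.castSucc)⁻¹ * (H k * T' k)).det
        = ((∏ j, ((R' k) j j).re ^ 2 : ℝ) : ℂ) := by
    intro k
    have heq : (1 : Matrix (Fin (N k)) (Fin (N k)) ℂ)
        + (H k * T' k)ᴴ * (Sig' k.castSucc)⁻¹ * (H k * T' k) = (R' k)ᴴ * R' k := by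
      rw [← hJ' k]
      congr 1
      rw [Matrix.conjTranspose_mul]
      simp only [Matrix.mul_assoc]
    exact aux_cholesky_det heq (hTri' k) (fun j => (hdiag' k j).1)
  have hppos : ∀ k : Fin K, ∀ j, (0:ℝ) < ((R' k) j j).re ^ 2 :=
    fun k j => pow_pos (hdiag' k j).2 2
  have hpos : 0 < ∏ k : Fin K, ∏ j, ((R' k) j j).re ^ 2 :=
    Finset.prod_pos fun k _ => Finset.prod_pos fun j _ => hppos k j
  have hprod_all : ∏ k : Fin K, ∏ j, ((R' k) j j).re ^ 2 = 2 ^ Info := by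
    have h1 : (Sig' (Fin.last K)).det
        = ((∏ k : Fin K, ∏ j, ((R' k) j j).re ^ 2 : ℝ) : ℂ) := by
      rw [hdetprod, Finset.prod_congr rfl (fun k _ => hdetk k), ← Complex.ofReal_prod]
    have h2 : Real.logb 2 (∏ k : Fin K, ∏ j, ((R' k) j j).re ^ 2) = Info := by
      have h3 := hInfo'
      rw [← hlast, h1] at h3
      rwa [Complex.ofReal_re] at h3
    calc ∏ k : Fin K, ∏ j, ((R' k) j j).re ^ 2
        = 2 ^ Real.logb 2 (∏ k : Fin K, ∏ j, ((R' k) j j).re ^ 2) :=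
          (Real.rpow_logb two_pos (by norm_num) hpos).symm
      _ = 2 ^ Info := by rw [h2]
  set p : (Σ k : Fin K, Fin (N k)) → ℝ := fun i => ((R' i.1) i.2 i.2).re ^ 2 with hp
  have hppos' : ∀ i, (0:ℝ) < p i := fun i => hppos i.1 i.2
  have hcard : Fintype.card (Σ k : Fin K, Fin (N k)) = Ntot := by
    simp [Fintype.card_sigma, hNtot]
  have hw : ∑ _i : (Σ k : Fin K, Fin (N k)), ((Ntot : ℝ))⁻¹ = 1 := by
    rw [Finset.sum_const, Finset.card_univ, hcard, nsmul_eq_mul,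
      mul_inv_cancel₀ hNtotR.ne']
  have hAM := Real.geom_mean_le_arith_mean_weighted Finset.univ
    (fun _ => ((Ntot : ℝ))⁻¹) (fun i => (p i)⁻¹)
    (fun i _ => by positivity) hw (fun i _ => (inv_nonneg.2 (hppos' i).le))
  have hprodp : ∏ i : (Σ k : Fin K, Fin (N k)), (p i)⁻¹ = ((2:ℝ) ^ Info)⁻¹ := by
    rw [Finset.prod_inv_distrib]
    congr 1
    rw [← hprod_all, ← Finset.univ_sigma_univ, Finset.prod_sigma]
  have hL : (∏ i : (Σ k : Fin K, Fin (N k)), ((p i)⁻¹) ^ ((Ntot : ℝ))⁻¹)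
      = (2:ℝ) ^ (-(Info / Ntot)) := by
    rw [Real.finset_prod_rpow _ _ (fun i _ => (inv_nonneg.2 (hppos' i).le)) _,
      hprodp, ← Real.rpow_neg (by norm_num : (0:ℝ) ≤ 2),
      ← Real.rpow_mul (by norm_num : (0:ℝ) ≤ 2)]
    congr 1
    field_simp
  rw [hL] at hAM
  have hsum_eq : ∑ k, ∑ j, (((R' k) j j).re) ^ (-2 : ℤ)
      = ∑ i : (Σ k : Fin K, Fin (N k)), (p i)⁻¹ := by
    rw [← Finset.univ_sigma_univ, Finset.sum_sigma]
    refine Finset.sum_congr rfl fun k _ => Finset.sum_congr rfl fun j _ => ?_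
    rw [_root_.zpow_neg]
    norm_num [hp]
  rw [hsum_eq]
  calc (2:ℝ) ^ (-(Info / Ntot))
      ≤ ∑ i : (Σ k : Fin K, Fin (N k)), ((Ntot : ℝ))⁻¹ * (p i)⁻¹ := hAM
    _ = (1 / (Ntot : ℝ)) * ∑ i : (Σ k : Fin K, Fin (N k)), (p i)⁻¹ := by
        rw [← Finset.mul_sum, one_div]
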